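/- Let T be a bounded linear operator on the space M(Ω) of finite signed Borel measures on a Polish space Ω. Then T is given by a bounded transition kernel k via (Tμ)(A) = ∫ k(x,A) dμ(x) if and only if the norm adjoint T* maps the space B_b(Ω) of bounded Borel measurable functions (embedded in M(Ω)*) into itself. -/

import Mathlib

open MeasureTheory Topology Filter
open scoped NNReal ENNReal BoundedContinuousFunction

noncomputable def sInt {Ω : Type*} [MeasurableSpace Ω] (μ : SignedMeasure Ω) (f : Ω → ℝ) : ℝ :=
  (∫ x, f x ∂μ.toJordanDecomposition.posPart) - ∫ x, f x ∂μ.toJordanDecomposition.negPart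

def IsTransKernel {Ω : Type*} [MeasurableSpace Ω] (k : Ω → SignedMeasure Ω) : Prop :=
  ∀ A : Set Ω, MeasurableSet A → Measurable fun x => k x A

def IsBddKernel {Ω : Type*} [MeasurableSpace Ω] (k : Ω → SignedMeasure Ω) : Prop :=
  IsTransKernel k ∧ ∃ C : ℝ≥0, ∀ x, (k x).totalVariation Set.univ ≤ C

def GivenByKernel {Ω : Type*} [MeasurableSpace Ω]
    (T : SignedMeasure Ω →ₗ[ℝ] SignedMeasure Ω) (k : Ω → SignedMeasure Ω) : Prop :=
  ∀ (μ : SignedMeasure Ω) (A : Set Ω), MeasurableSet A → T μ A = sInt μ (fun x => k x A)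

def IsBdMeasurable {Ω : Type*} [MeasurableSpace Ω] (f : Ω → ℝ) : Prop :=
  Measurable f ∧ ∃ C : ℝ, ∀ x, |f x| ≤ C

instance totalVariation_isFiniteMeasure {Ω : Type*} [MeasurableSpace Ω] (μ : SignedMeasure Ω) :
    IsFiniteMeasure μ.totalVariation := by
  unfold SignedMeasure.totalVariation; infer_instance

namespace Stmt5Aux

variable {Ω : Type*} [MeasurableSpace Ω]

lemma integrable_of_bdd {ν : Measure Ω} [IsFiniteMeasure ν] {f : Ω → ℝ} {C : ℝ}
    (hf : Measurable f) (hC : ∀ x, ‖f x‖ ≤ C) : Integrable f ν :=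
  ⟨hf.aestronglyMeasurable, HasFiniteIntegral.of_bounded (Filter.Eventually.of_forall hC)⟩

lemma signedMeasure_apply (μ : SignedMeasure Ω) {A : Set Ω} (hA : MeasurableSet A) :
    μ A = (μ.toJordanDecomposition.posPart A).toReal
        - (μ.toJordanDecomposition.negPart A).toReal := by
  conv_lhs => rw [← μ.toSignedMeasure_toJordanDecomposition]
  rw [JordanDecomposition.toSignedMeasure, VectorMeasure.sub_apply,
    Measure.toSignedMeasure_apply_measurable hA, Measure.toSignedMeasure_apply_measurable hA]
  rfl

lemma sInt_indicator (μ : SignedMeasure Ω) {A : Set Ω} (hA : MeasurableSet A) (c : ℝ) :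
    sInt μ (A.indicator fun _ => c) = c * μ A := by
  rw [sInt, integral_indicator_const c hA, integral_indicator_const c hA,
    signedMeasure_apply μ hA]
  simp [smul_eq_mul]; simp only [Measure.real]; ring

lemma sInt_smul (μ : SignedMeasure Ω) (c : ℝ) (f : Ω → ℝ) :
    sInt μ (fun x => c * f x) = c * sInt μ f := by
  rw [sInt, integral_const_mul, integral_const_mul, sInt]; ring

lemma sInt_add (μ : SignedMeasure Ω) {f g : Ω → ℝ} (hf : Measurable f) (hg : Measurable g)
    {Cf Cg : ℝ} (hbf : ∀ x, ‖f x‖ ≤ Cf) (hbg : ∀ x, ‖g x‖ ≤ Cg) :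
    sInt μ (f + g) = sInt μ f + sInt μ g := by
  unfold sInt
  simp only [Pi.add_apply]
  rw [integral_add (integrable_of_bdd hf hbf) (integrable_of_bdd hg hbg),
    integral_add (integrable_of_bdd hf hbf) (integrable_of_bdd hg hbg)]
  ring

lemma sInt_abs_le (μ : SignedMeasure Ω) {f : Ω → ℝ} {C : ℝ} (hC : ∀ x, ‖f x‖ ≤ C) :
    |sInt μ f| ≤ C * (μ.totalVariation Set.univ).toReal := by
  have h1 : ‖∫ x, f x ∂μ.toJordanDecomposition.posPart‖
      ≤ C * (μ.toJordanDecomposition.posPart Set.univ).toReal :=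
    norm_integral_le_of_norm_le_const (Filter.Eventually.of_forall hC)
  have h2 : ‖∫ x, f x ∂μ.toJordanDecomposition.negPart‖
      ≤ C * (μ.toJordanDecomposition.negPart Set.univ).toReal :=
    norm_integral_le_of_norm_le_const (Filter.Eventually.of_forall hC)
  have htv : (μ.totalVariation Set.univ).toReal
      = (μ.toJordanDecomposition.posPart Set.univ).toReal
        + (μ.toJordanDecomposition.negPart Set.univ).toReal := by
    rw [SignedMeasure.totalVariation, Measure.add_apply,
      ENNReal.toReal_add (measure_ne_top _ _) (measure_ne_top _ _)]
  rw [sInt, htv]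
  calc |_ - _| ≤ ‖∫ x, f x ∂μ.toJordanDecomposition.posPart‖
      + ‖∫ x, f x ∂μ.toJordanDecomposition.negPart‖ := abs_sub _ _
    _ ≤ _ := by rw [mul_add]; exact add_le_add h1 h2

lemma tv_toReal_le {μ : SignedMeasure Ω} {C : ℝ≥0} (h : μ.totalVariation Set.univ ≤ C) :
    (μ.totalVariation Set.univ).toReal ≤ C := ENNReal.toReal_le_coe_of_le_coe h

lemma jordan_toSignedMeasure (ν : Measure Ω) [IsFiniteMeasure ν] :
    ν.toSignedMeasure.toJordanDecomposition
      = ⟨ν, 0, Measure.MutuallySingular.zero_right⟩ := by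
  have : (⟨ν, 0, Measure.MutuallySingular.zero_right⟩ :
      JordanDecomposition Ω).toSignedMeasure = ν.toSignedMeasure := by
    rw [JordanDecomposition.toSignedMeasure]
    simp [Measure.toSignedMeasure_zero]
  rw [← this, JordanDecomposition.toJordanDecomposition_toSignedMeasure]

lemma sInt_toSignedMeasure (ν : Measure Ω) [IsFiniteMeasure ν] (f : Ω → ℝ) :
    sInt ν.toSignedMeasure f = ∫ x, f x ∂ν := by
  rw [sInt, jordan_toSignedMeasure]
  simp

lemma tv_toSignedMeasure (ν : Measure Ω) [IsFiniteMeasure ν] :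
    ν.toSignedMeasure.totalVariation = ν := by
  rw [SignedMeasure.totalVariation, jordan_toSignedMeasure]
  simp

lemma sInt_dirac (x : Ω) {g : Ω → ℝ} (hg : Measurable g) :
    sInt (Measure.dirac x).toSignedMeasure g = g x := by
  rw [sInt_toSignedMeasure, integral_dirac' g x hg.stronglyMeasurable]

lemma sInt_tendsto (μ : SignedMeasure Ω) {F : ℕ → Ω → ℝ} {f : Ω → ℝ} (B : ℝ)
    (hFm : ∀ n, Measurable (F n)) (hFb : ∀ n x, ‖F n x‖ ≤ B)
    (hlim : ∀ x, Tendsto (fun n => F n x) atTop (𝓝 (f x))) :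
    Tendsto (fun n => sInt μ (F n)) atTop (𝓝 (sInt μ f)) := by
  unfold sInt
  exact (tendsto_integral_of_dominated_convergence (fun _ => B)
      (fun n => (hFm n).aestronglyMeasurable) (integrable_const B)
      (fun n => Filter.Eventually.of_forall (hFb n))
      (Filter.Eventually.of_forall hlim)).sub
    (tendsto_integral_of_dominated_convergence (fun _ => B)
      (fun n => (hFm n).aestronglyMeasurable) (integrable_const B)
      (fun n => Filter.Eventually.of_forall (hFb n))
      (Filter.Eventually.of_forall hlim))

end Stmt5Aux

theorem stmt5 {Ω : Type*} [TopologicalSpace Ω] [PolishSpace Ω] [MeasurableSpace Ω] [BorelSpace Ω]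
    (T : SignedMeasure Ω →ₗ[ℝ] SignedMeasure Ω)
    (hT : ∃ C : ℝ≥0, ∀ μ : SignedMeasure Ω,
      (T μ).totalVariation Set.univ ≤ C * μ.totalVariation Set.univ) :
    (∃ k : Ω → SignedMeasure Ω, IsBddKernel k ∧ GivenByKernel T k) ↔
      ∀ f : Ω → ℝ, IsBdMeasurable f →
        ∃ g : Ω → ℝ, IsBdMeasurable g ∧ ∀ μ : SignedMeasure Ω, sInt (T μ) f = sInt μ g := by
  classical
  obtain ⟨Ct, hCt⟩ := hT
  constructor
  · rintro ⟨k, ⟨hker, Ck, hCk⟩, hgbk⟩ f ⟨hfm, Cf0, hCf0⟩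
    set Cf : ℝ := max Cf0 0 with hCfdef
    have hCf : ∀ x, ‖f x‖ ≤ Cf := fun x =>
      le_trans (by rw [Real.norm_eq_abs]; exact hCf0 x) (le_max_left _ _)
    have hCfnn : (0:ℝ) ≤ Cf := le_max_right _ _
    have htvk : ∀ x, ((k x).totalVariation Set.univ).toReal ≤ Ck := fun x =>
      Stmt5Aux.tv_toReal_le (hCk x)
    have key : ∀ φ : SimpleFunc Ω ℝ, (Measurable fun x => sInt (k x) φ) ∧
        ∀ μ : SignedMeasure Ω, sInt (T μ) φ = sInt μ (fun x => sInt (k x) φ) := by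
      intro φ
      refine SimpleFunc.induction ?_ ?_ φ
      · intro c s hs
        have hco : ⇑(SimpleFunc.piecewise s hs (SimpleFunc.const Ω c) (SimpleFunc.const Ω 0))
            = s.indicator (fun _ => c) := by
          funext x
          by_cases hx : x ∈ s <;> simp [SimpleFunc.piecewise_apply, Set.indicator, hx]
        rw [hco]
        constructor
        · have : (fun x => sInt (k x) (s.indicator fun _ => c)) = fun x => c * k x s := by
            funext x; exact Stmt5Aux.sInt_indicator (k x) hs c
          rw [this]
          exact (hker s hs).const_mul c
        · intro μ
          rw [Stmt5Aux.sInt_indicator (T μ) hs c, hgbk μ s hs,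
            ← Stmt5Aux.sInt_smul μ c (fun x => k x s)]
          congr 1
          funext x
          exact (Stmt5Aux.sInt_indicator (k x) hs c).symm
      · intro φ ψ _ hφ hψ
        obtain ⟨Cφ0, hCφ0⟩ := φ.exists_forall_norm_le
        obtain ⟨Cψ0, hCψ0⟩ := ψ.exists_forall_norm_le
        have hCφ : ∀ x, ‖φ x‖ ≤ max Cφ0 0 := fun x => (hCφ0 x).trans (le_max_left _ _)
        have hCψ : ∀ x, ‖ψ x‖ ≤ max Cψ0 0 := fun x => (hCψ0 x).trans (le_max_left _ _)
        have hcoe : ⇑(φ + ψ) = ⇑φ + ⇑ψ := SimpleFunc.coe_add φ ψ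
        have hsplit : (fun x => sInt (k x) (⇑φ + ⇑ψ))
            = fun x => sInt (k x) φ + sInt (k x) ψ := by
          funext x
          exact Stmt5Aux.sInt_add (k x) φ.measurable ψ.measurable hCφ hCψ
        have hbφ : ∀ x, ‖sInt (k x) φ‖ ≤ max Cφ0 0 * Ck := fun x => by
          rw [Real.norm_eq_abs]
          exact (Stmt5Aux.sInt_abs_le (k x) hCφ).trans
            (mul_le_mul_of_nonneg_left (htvk x) (le_max_right _ _))
        have hbψ : ∀ x, ‖sInt (k x) ψ‖ ≤ max Cψ0 0 * Ck := fun x => by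
          rw [Real.norm_eq_abs]
          exact (Stmt5Aux.sInt_abs_le (k x) hCψ).trans
            (mul_le_mul_of_nonneg_left (htvk x) (le_max_right _ _))
        constructor
        · rw [hcoe, hsplit]
          exact hφ.1.add hψ.1
        · intro μ
          rw [hcoe, hsplit, Stmt5Aux.sInt_add (T μ) φ.measurable ψ.measurable hCφ hCψ,
            hφ.2 μ, hψ.2 μ]
          have : (fun x => sInt (k x) φ + sInt (k x) ψ)
              = (fun x => sInt (k x) φ) + (fun x => sInt (k x) ψ) := rfl
          rw [this, Stmt5Aux.sInt_add μ hφ.1 hψ.1 hbφ hbψ]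
    set F : ℕ → SimpleFunc Ω ℝ :=
      fun n => SimpleFunc.approxOn f hfm Set.univ 0 (Set.mem_univ 0) n with hF
    have htend : ∀ x, Tendsto (fun n => F n x) atTop (𝓝 (f x)) := fun x =>
      SimpleFunc.tendsto_approxOn hfm (Set.mem_univ 0) (by simp)
    have hFb : ∀ n x, ‖F n x‖ ≤ Cf + Cf := fun n x =>
      (SimpleFunc.norm_approxOn_zero_le hfm (Set.mem_univ 0) x n).trans
        (add_le_add (hCf x) (hCf x))
    set g : Ω → ℝ := fun x => sInt (k x) f with hgdef
    have hgt : ∀ x, Tendsto (fun n => sInt (k x) (F n)) atTop (𝓝 (g x)) := fun x =>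
      Stmt5Aux.sInt_tendsto (k x) (Cf + Cf) (fun n => (F n).measurable) hFb htend
    have hgm : Measurable g :=
      measurable_of_tendsto_metrizable (fun n => (key (F n)).1) (tendsto_pi_nhds.2 hgt)
    have hgb : ∀ x, |g x| ≤ Cf * Ck := fun x =>
      (Stmt5Aux.sInt_abs_le (k x) hCf).trans (mul_le_mul_of_nonneg_left (htvk x) hCfnn)
    refine ⟨g, ⟨hgm, Cf * Ck, hgb⟩, fun μ => ?_⟩
    have h1 : Tendsto (fun n => sInt (T μ) (F n)) atTop (𝓝 (sInt (T μ) f)) :=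
      Stmt5Aux.sInt_tendsto (T μ) (Cf + Cf) (fun n => (F n).measurable) hFb htend
    have h2 : (fun n => sInt (T μ) (F n)) = fun n => sInt μ (fun x => sInt (k x) (F n)) :=
      funext fun n => (key (F n)).2 μ
    have hGb : ∀ n x, ‖sInt (k x) (F n)‖ ≤ (Cf + Cf) * Ck := fun n x => by
      rw [Real.norm_eq_abs]
      exact (Stmt5Aux.sInt_abs_le (k x) (hFb n)).trans
        (mul_le_mul_of_nonneg_left (htvk x) (by positivity))
    have h3 : Tendsto (fun n => sInt μ (fun x => sInt (k x) (F n))) atTop (𝓝 (sInt μ g)) :=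
      Stmt5Aux.sInt_tendsto μ ((Cf + Cf) * Ck) (fun n => (key (F n)).1) hGb hgt
    exact tendsto_nhds_unique (h2 ▸ h1) h3
  · intro h
    have hgA : ∀ A : Set Ω, MeasurableSet A →
        ∃ g : Ω → ℝ, IsBdMeasurable g ∧ ∀ μ : SignedMeasure Ω, T μ A = sInt μ g := by
      intro A hA
      obtain ⟨g, hg, hgeq⟩ := h (A.indicator fun _ => (1:ℝ))
        ⟨measurable_const.indicator hA, 1, fun x => by
          by_cases hx : x ∈ A <;> simp [Set.indicator, hx]⟩
      refine ⟨g, hg, fun μ => ?_⟩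
      have := hgeq μ
      rwa [Stmt5Aux.sInt_indicator (T μ) hA 1, one_mul] at this
    choose G hG using hgA
    set k : Ω → SignedMeasure Ω := fun x => T ((Measure.dirac x).toSignedMeasure) with hk
    have hkey : ∀ (A : Set Ω) (hA : MeasurableSet A), (fun x => k x A) = G A hA := by
      intro A hA
      funext x
      have := (hG A hA).2 ((Measure.dirac x).toSignedMeasure)
      rwa [Stmt5Aux.sInt_dirac x (hG A hA).1.1] at this
    refine ⟨k, ⟨fun A hA => by rw [hkey A hA]; exact (hG A hA).1.1, Ct, fun x => ?_⟩,
      fun μ A hA => ?_⟩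
    · have h1 := hCt ((Measure.dirac x).toSignedMeasure)
      rw [Stmt5Aux.tv_toSignedMeasure] at h1
      simpa using h1
    · rw [hkey A hA]
      exact (hG A hA).2 μ
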